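/- Let S = {s₁, …, s_m} be a finite set of points in the plane with m ≥ 2. The furthest-site Voronoi region FSV(s_i) = {x ∈ ℝ² : dist(x, s_i) ≥ dist(x, s_j) for all j} is nonempty (has nonempty interior) if and only if s_i is a vertex of the convex hull of S. -/

import Mathlib

open Metric RealInnerProductSpace

/-- The furthest-site Voronoi region of a site `s` in a finite planar point set
`S` has nonempty interior iff `s` is a vertex of the convex hull of `S`,
i.e. iff `s` is not in the convex hull of the other sites. -/
theorem fsv_region_nonempty_iff_hull_vertex
    (S : Finset (EuclideanSpace ℝ (Fin 2))) (hcard : 2 ≤ S.card)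
    (s : EuclideanSpace ℝ (Fin 2)) (hs : s ∈ S) :
    (interior {x : EuclideanSpace ℝ (Fin 2) |
        ∀ t ∈ S, dist x t ≤ dist x s}).Nonempty ↔
      s ∉ convexHull ℝ ((S : Set (EuclideanSpace ℝ (Fin 2))) \ {s}) := by
  classical
  set T : Finset (EuclideanSpace ℝ (Fin 2)) := S.erase s with hTdef
  have hTS : (T : Set (EuclideanSpace ℝ (Fin 2))) = (S : Set (EuclideanSpace ℝ (Fin 2))) \ {s} := Finset.coe_erase s S
  constructor
  · -- s in hull of the others ⇒ region empty (even without taking interior)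
    rintro ⟨x, hx⟩ hmem
    have hxR : ∀ t ∈ S, dist x t ≤ dist x s := interior_subset hx
    rw [← hTS, Finset.convexHull_eq] at hmem
    obtain ⟨w, hw0, hw1, hws⟩ := hmem
    have hsum : ∑ t ∈ T, w t • t = s := by
      rw [← Finset.centerMass_eq_of_sum_1 _ _ hw1]; exact hws
    have hzero : ∑ t ∈ T, w t • (s - t) = (0 : EuclideanSpace ℝ (Fin 2)) := by
      simp only [smul_sub, Finset.sum_sub_distrib, ← Finset.sum_smul, hw1, hsum, one_smul,
        sub_self]
    have expand : ∀ t : EuclideanSpace ℝ (Fin 2), ‖x - t‖ ^ 2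
        = ‖x - s‖ ^ 2 + 2 * ⟪x - s, s - t⟫ + ‖t - s‖ ^ 2 := by
      intro t
      have h1 : x - t = (x - s) + (s - t) := by abel
      rw [h1, norm_add_sq_real, norm_sub_rev s t]
    have key : ∑ t ∈ T, w t * ‖x - t‖ ^ 2
        = ‖x - s‖ ^ 2 + ∑ t ∈ T, w t * ‖t - s‖ ^ 2 := by
      calc ∑ t ∈ T, w t * ‖x - t‖ ^ 2
          = ∑ t ∈ T, (w t * ‖x - s‖ ^ 2 + 2 * ⟪x - s, w t • (s - t)⟫
              + w t * ‖t - s‖ ^ 2) := by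
            refine Finset.sum_congr rfl fun t _ => ?_
            rw [expand t, real_inner_smul_right]; ring
        _ = ‖x - s‖ ^ 2 + ∑ t ∈ T, w t * ‖t - s‖ ^ 2 := by
            rw [Finset.sum_add_distrib, Finset.sum_add_distrib, ← Finset.sum_mul, hw1,
              ← Finset.mul_sum, ← inner_sum, hzero, inner_zero_right]
            ring
    have hle : ∑ t ∈ T, w t * ‖x - t‖ ^ 2 ≤ ∑ t ∈ T, w t * ‖x - s‖ ^ 2 := by
      refine Finset.sum_le_sum fun t ht => ?_
      have h1 : ‖x - t‖ ≤ ‖x - s‖ := by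
        have := hxR t (Finset.mem_of_mem_erase ht)
        rwa [dist_eq_norm, dist_eq_norm] at this
      exact mul_le_mul_of_nonneg_left
        (pow_le_pow_left₀ (norm_nonneg _) h1 2) (hw0 t ht)
    rw [key, ← Finset.sum_mul, hw1, one_mul] at hle
    have hsum0 : ∑ t ∈ T, w t * ‖t - s‖ ^ 2 = 0 := by
      have hnn : (0 : ℝ) ≤ ∑ t ∈ T, w t * ‖t - s‖ ^ 2 :=
        Finset.sum_nonneg fun t ht => mul_nonneg (hw0 t ht) (sq_nonneg _)
      linarith
    obtain ⟨t₀, ht₀, hwt₀⟩ := Finset.exists_ne_zero_of_sum_ne_zero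
      (by rw [hw1]; norm_num : ∑ t ∈ T, w t ≠ 0)
    have := (Finset.sum_eq_zero_iff_of_nonneg
      (fun t ht => mul_nonneg (hw0 t ht) (sq_nonneg _))).mp hsum0 t₀ ht₀
    have hts : t₀ = s := by
      have h2 : ‖t₀ - s‖ ^ 2 = 0 := by
        rcases mul_eq_zero.mp this with h | h
        · exact absurd h hwt₀
        · exact h
      have := pow_eq_zero_iff (n := 2) (by norm_num) |>.mp h2
      rwa [norm_sub_eq_zero_iff] at this
    exact Finset.ne_of_mem_erase ht₀ hts
  · -- s a hull vertex ⇒ region has nonempty interior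
    intro hns
    rw [← hTS] at hns
    obtain ⟨f, u, hfu, hus⟩ := geometric_hahn_banach_closed_point
      (convex_convexHull ℝ _) ((T.finite_toSet.isCompact_convexHull ℝ).isClosed) hns
    set v : EuclideanSpace ℝ (Fin 2) := (InnerProductSpace.toDual ℝ (EuclideanSpace ℝ (Fin 2))).symm f with hv
    have hvf : ∀ y : EuclideanSpace ℝ (Fin 2), ⟪v, y⟫ = f y := fun y => InnerProductSpace.toDual_symm_apply
    have hT : T.Nonempty := by
      rcases Finset.card_pos.mp (by
        rw [hTdef, Finset.card_erase_of_mem hs]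
        omega : 0 < T.card) with ⟨t, ht⟩
      exact ⟨t, ht⟩
    set δ : ℝ := f s - u with hδ
    have hδpos : 0 < δ := by simp [hδ]; linarith
    have hgap : ∀ t ∈ T, δ < f s - f t := by
      intro t ht
      have : f t < u := hfu t (subset_convexHull ℝ _ ht)
      simp [hδ]; linarith
    set M : ℝ := T.sup' hT (fun t => ‖s - t‖ ^ 2) with hM
    set r : ℝ := M / (2 * δ) + 1 with hr
    have hMnn : 0 ≤ M := by
      obtain ⟨t, ht⟩ := hT
      have h := Finset.le_sup' (fun u => ‖s - u‖ ^ 2) ht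
      rw [← hM] at h
      exact le_trans (sq_nonneg _) h
    have hrpos : 0 < r := by
      have : 0 ≤ M / (2 * δ) := div_nonneg hMnn (by linarith)
      simp [hr]; linarith
    set x : EuclideanSpace ℝ (Fin 2) := s - r • v with hx
    have hstrict : ∀ t ∈ T, dist x t < dist x s := by
      intro t ht
      have h1 : ‖s - t‖ ^ 2 ≤ M := by
        have h := Finset.le_sup' (fun u => ‖s - u‖ ^ 2) ht
        rw [← hM] at h
        exact h
      have h2 : δ < f s - f t := hgap t ht
      have hx_s : x - s = -(r • v) := by rw [hx]; abel
      have hx_t : x - t = (s - t) - r • v := by rw [hx]; abel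
      have hinner : ⟪s - t, r • v⟫ = r * (f s - f t) := by
        rw [real_inner_smul_right, real_inner_comm, hvf, map_sub]
      have hsq : ‖x - t‖ ^ 2 < ‖x - s‖ ^ 2 := by
        rw [hx_s, hx_t, norm_sub_sq_real, hinner, norm_neg]
        have hrdelta : M + 2 * δ ≤ 2 * r * δ := by
          have heq : 2 * r * δ = M + 2 * δ := by
            rw [hr]
            field_simp
          linarith
        nlinarith
      have := lt_of_pow_lt_pow_left₀ 2 (norm_nonneg (x - s)) hsq
      rwa [dist_eq_norm, dist_eq_norm]
    refine ⟨x, ?_⟩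
    rw [mem_interior]
    refine ⟨{y : EuclideanSpace ℝ (Fin 2) | ∀ t ∈ T, dist y t < dist y s}, ?_, ?_, hstrict⟩
    · intro y hy t ht
      rcases eq_or_ne t s with rfl | hts
      · exact le_rfl
      · exact le_of_lt (hy t (Finset.mem_erase.mpr ⟨hts, ht⟩))
    · have : {y : EuclideanSpace ℝ (Fin 2) | ∀ t ∈ T, dist y t < dist y s}
          = ⋂ t ∈ T, {y : EuclideanSpace ℝ (Fin 2) | dist y t < dist y s} := by
        ext y; simp
      rw [this]
      exact isOpen_biInter_finset fun t _ =>
        isOpen_lt (continuous_id.dist continuous_const) (continuous_id.dist continuous_const)
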